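/- Let X and Y be Banach spaces and F : X ⇒ Y a homogeneous set-valued mapping. If F is metrically regular near (0,0), then F is globally metrically regular with the same rate: d(x, F⁻¹(y)) ≤ K d(y, F(x)) for all x ∈ X, y ∈ Y, where K is any regularity constant valid near (0,0). -/

import Mathlib

open EMetric ENNReal Pointwise

/-- A homogeneous set-valued mapping between Banach spaces that is metrically
regular near `(0,0)` with constant `K` is globally metrically regular with the
same constant: `d(x, F⁻¹ y) ≤ K d(y, F x)` for all `x, y`. -/
theorem homogeneous_regularity_global {X Y : Type*}
    [NormedAddCommGroup X] [NormedSpace ℝ X] [CompleteSpace X]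
    [NormedAddCommGroup Y] [NormedSpace ℝ Y] [CompleteSpace Y]
    (F : X → Set Y) (h0 : (0 : Y) ∈ F 0)
    (hcone : ∀ t : ℝ, 0 < t → ∀ x y, y ∈ F x → t • y ∈ F (t • x))
    (K : ℝ≥0∞) (ε : ℝ) (hε : 0 < ε)
    (hreg : ∀ x : X, ∀ y : Y, ‖x‖ < ε → ‖y‖ < ε →
      infEdist x {u : X | y ∈ F u} ≤ K * infEdist y (F x)) :
    ∀ x : X, ∀ y : Y, infEdist x {u : X | y ∈ F u} ≤ K * infEdist y (F x) := by
  intro x y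
  set c : ℝ := ‖x‖ + ‖y‖ + 1 with hc
  have hcpos : 0 < c := by positivity
  set t : ℝ := ε / (2 * c) with ht
  have htpos : 0 < t := by positivity
  have htne : t ≠ 0 := ne_of_gt htpos
  -- smallness
  have hxs : ‖t • x‖ < ε := by
    rw [norm_smul, Real.norm_eq_abs, abs_of_pos htpos]
    calc t * ‖x‖ ≤ t * c := by
          apply mul_le_mul_of_nonneg_left _ htpos.le
          nlinarith [norm_nonneg x, norm_nonneg y]
      _ = ε / 2 := by rw [ht]; field_simp
      _ < ε := by linarith
  have hys : ‖t • y‖ < ε := by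
    rw [norm_smul, Real.norm_eq_abs, abs_of_pos htpos]
    calc t * ‖y‖ ≤ t * c := by
          apply mul_le_mul_of_nonneg_left _ htpos.le
          nlinarith [norm_nonneg x, norm_nonneg y]
      _ = ε / 2 := by rw [ht]; field_simp
      _ < ε := by linarith
  have key := hreg (t • x) (t • y) hxs hys
  -- preimage set equality: {u | t•y ∈ F u} = t • {u | y ∈ F u}
  have hset : {u : X | t • y ∈ F u} = t • {u : X | y ∈ F u} := by
    ext u
    constructor
    · intro hu
      refine ⟨t⁻¹ • u, ?_, by simp [smul_smul, mul_inv_cancel₀ htne]⟩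
      have := hcone t⁻¹ (by positivity) u (t • y) hu
      simpa [smul_smul, inv_mul_cancel₀ htne] using this
    · rintro ⟨v, hv, rfl⟩
      exact hcone t htpos v y hv
  have hsub : t • F x ⊆ F (t • x) := by
    rintro _ ⟨w, hw, rfl⟩
    exact hcone t htpos x w hw
  have hL : (‖t‖₊ : ℝ≥0∞) * infEdist x {u : X | y ∈ F u}
      ≤ K * infEdist (t • y) (F (t • x)) := by
    calc (‖t‖₊ : ℝ≥0∞) * infEdist x {u : X | y ∈ F u}
        = infEdist (t • x) (t • {u : X | y ∈ F u}) := by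
          unfold EMetric.infEdist; rw [infEdist_smul₀ htne]; rfl
      _ = infEdist (t • x) {u : X | t • y ∈ F u} := by rw [hset]
      _ ≤ K * infEdist (t • y) (F (t • x)) := key
  have hR : infEdist (t • y) (F (t • x)) ≤ (‖t‖₊ : ℝ≥0∞) * infEdist y (F x) := by
    calc infEdist (t • y) (F (t • x)) ≤ infEdist (t • y) (t • F x) :=
          infEdist_anti hsub
      _ = (‖t‖₊ : ℝ≥0∞) * infEdist y (F x) := by unfold EMetric.infEdist; rw [infEdist_smul₀ htne]; rfl
  have hfinal : (‖t‖₊ : ℝ≥0∞) * infEdist x {u : X | y ∈ F u}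
      ≤ (‖t‖₊ : ℝ≥0∞) * (K * infEdist y (F x)) := by
    calc (‖t‖₊ : ℝ≥0∞) * infEdist x {u : X | y ∈ F u}
        ≤ K * infEdist (t • y) (F (t • x)) := hL
      _ ≤ K * ((‖t‖₊ : ℝ≥0∞) * infEdist y (F x)) := by
          exact mul_le_mul_right hR K
      _ = (‖t‖₊ : ℝ≥0∞) * (K * infEdist y (F x)) := by ring
  have htne' : (‖t‖₊ : ℝ≥0∞) ≠ 0 := by simp [htne]
  exact (ENNReal.mul_le_mul_iff_right htne' ENNReal.coe_ne_top).mp hfinal
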